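/- For three point vortices evolving under the point-vortex equations, the squared pairwise distances satisfy d(ℓ₂₃²)/dt = 4σA Γ₁(ℓ₁₂⁻² - ℓ₃₁⁻²), d(ℓ₃₁²)/dt = 4σA Γ₂(ℓ₂₃⁻² - ℓ₁₂⁻²), d(ℓ₁₂²)/dt = 4σA Γ₃(ℓ₃₁⁻² - ℓ₂₃⁻²), where A is the area of the triangle formed by the vortices and σA = (1/2)((r₂ - r₁) × (r₃ - r₁)) (the signed area up to sign convention). -/

import Mathlib

set_option maxHeartbeats 2000000 in
/-- Gröbli's equations: evolution of the squared pairwise distances for three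
point vortices, where `σA = (1/2)((r₂-r₁) × (r₃-r₁))` is the signed area. -/
theorem grobli_distance_equations (Γ1 Γ2 Γ3 : ℝ) (x1 y1 x2 y2 x3 y3 : ℝ → ℝ)
    (hsep : ∀ t : ℝ,
      0 < (x1 t - x2 t) ^ 2 + (y1 t - y2 t) ^ 2 ∧
      0 < (x2 t - x3 t) ^ 2 + (y2 t - y3 t) ^ 2 ∧
      0 < (x3 t - x1 t) ^ 2 + (y3 t - y1 t) ^ 2)
    (h1x : ∀ t : ℝ, HasDerivAt x1
      (-(Γ2 * (y1 t - y2 t) / ((x1 t - x2 t) ^ 2 + (y1 t - y2 t) ^ 2)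
        + Γ3 * (y1 t - y3 t) / ((x1 t - x3 t) ^ 2 + (y1 t - y3 t) ^ 2))) t)
    (h1y : ∀ t : ℝ, HasDerivAt y1
      (Γ2 * (x1 t - x2 t) / ((x1 t - x2 t) ^ 2 + (y1 t - y2 t) ^ 2)
        + Γ3 * (x1 t - x3 t) / ((x1 t - x3 t) ^ 2 + (y1 t - y3 t) ^ 2)) t)
    (h2x : ∀ t : ℝ, HasDerivAt x2
      (-(Γ1 * (y2 t - y1 t) / ((x2 t - x1 t) ^ 2 + (y2 t - y1 t) ^ 2)
        + Γ3 * (y2 t - y3 t) / ((x2 t - x3 t) ^ 2 + (y2 t - y3 t) ^ 2))) t)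
    (h2y : ∀ t : ℝ, HasDerivAt y2
      (Γ1 * (x2 t - x1 t) / ((x2 t - x1 t) ^ 2 + (y2 t - y1 t) ^ 2)
        + Γ3 * (x2 t - x3 t) / ((x2 t - x3 t) ^ 2 + (y2 t - y3 t) ^ 2)) t)
    (h3x : ∀ t : ℝ, HasDerivAt x3
      (-(Γ1 * (y3 t - y1 t) / ((x3 t - x1 t) ^ 2 + (y3 t - y1 t) ^ 2)
        + Γ2 * (y3 t - y2 t) / ((x3 t - x2 t) ^ 2 + (y3 t - y2 t) ^ 2))) t)
    (h3y : ∀ t : ℝ, HasDerivAt y3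
      (Γ1 * (x3 t - x1 t) / ((x3 t - x1 t) ^ 2 + (y3 t - y1 t) ^ 2)
        + Γ2 * (x3 t - x2 t) / ((x3 t - x2 t) ^ 2 + (y3 t - y2 t) ^ 2)) t) :
    ∀ t : ℝ,
      -- signed area σA; the paper's σ is +1 for a clockwise-ordered triangle,
      -- so σA = -(1/2)((r₂-r₁) × (r₃-r₁)) with the counterclockwise-positive cross product
      let sA := -((1 / 2) * ((x2 t - x1 t) * (y3 t - y1 t) - (y2 t - y1 t) * (x3 t - x1 t)))
      HasDerivAt (fun s => (x2 s - x3 s) ^ 2 + (y2 s - y3 s) ^ 2)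
        (4 * sA * Γ1 * (1 / ((x1 t - x2 t) ^ 2 + (y1 t - y2 t) ^ 2)
          - 1 / ((x3 t - x1 t) ^ 2 + (y3 t - y1 t) ^ 2))) t ∧
      HasDerivAt (fun s => (x3 s - x1 s) ^ 2 + (y3 s - y1 s) ^ 2)
        (4 * sA * Γ2 * (1 / ((x2 t - x3 t) ^ 2 + (y2 t - y3 t) ^ 2)
          - 1 / ((x1 t - x2 t) ^ 2 + (y1 t - y2 t) ^ 2))) t ∧
      HasDerivAt (fun s => (x1 s - x2 s) ^ 2 + (y1 s - y2 s) ^ 2)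
        (4 * sA * Γ3 * (1 / ((x3 t - x1 t) ^ 2 + (y3 t - y1 t) ^ 2)
          - 1 / ((x2 t - x3 t) ^ 2 + (y2 t - y3 t) ^ 2))) t := by
  intro t
  obtain ⟨p12, p23, p31⟩ := hsep t
  have e21 : (x2 t - x1 t) ^ 2 + (y2 t - y1 t) ^ 2
      = (x1 t - x2 t) ^ 2 + (y1 t - y2 t) ^ 2 := by ring
  have e32 : (x3 t - x2 t) ^ 2 + (y3 t - y2 t) ^ 2
      = (x2 t - x3 t) ^ 2 + (y2 t - y3 t) ^ 2 := by ring
  have e13 : (x1 t - x3 t) ^ 2 + (y1 t - y3 t) ^ 2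
      = (x3 t - x1 t) ^ 2 + (y3 t - y1 t) ^ 2 := by ring
  have n12 := p12.ne'
  have n23 := p23.ne'
  have n31 := p31.ne'
  have d23 := ((((h2x t).sub (h3x t)).pow 2).add (((h2y t).sub (h3y t)).pow 2))
  have d31 := ((((h3x t).sub (h1x t)).pow 2).add (((h3y t).sub (h1y t)).pow 2))
  have d12 := ((((h1x t).sub (h2x t)).pow 2).add (((h1y t).sub (h2y t)).pow 2))
  simp only [e21, e32, e13] at d23 d31 d12
  refine ⟨?_, ?_, ?_⟩
  · refine d23.congr_deriv ?_
    simp only [div_eq_mul_inv, one_div, Pi.sub_apply, Nat.cast_ofNat]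
    ring
  · refine d31.congr_deriv ?_
    simp only [div_eq_mul_inv, one_div, Pi.sub_apply, Nat.cast_ofNat]
    ring
  · refine d12.congr_deriv ?_
    simp only [div_eq_mul_inv, one_div, Pi.sub_apply, Nat.cast_ofNat]
    ring
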